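/- Let N ≥ 2 and 0 ≤ k ≤ N. Then the Dicke vector |k, N−k⟩ is an eigenvector of S_{2,N}(σ₁⊗σ₁ + σ₂⊗σ₂): S_{2,N}(σ₁⊗σ₁ + σ₂⊗σ₂)|k, N−k⟩ = (4k(N−k)/(N(N−1))) · |k, N−k⟩. -/

import Mathlib

open scoped ComplexConjugate
open MeasureTheory Filter Topology

noncomputable section

/-! ## Setting

`M₂(ℂ)^{⊗N}` is realized as matrices indexed by `Fin N → Fin 2`, acting on
`(ℂ²)^{⊗N} = EuclideanSpace ℂ (Fin N → Fin 2)`. -/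

/-- `M₂(ℂ)^{⊗N}`, realized as matrices indexed by `Fin N → Fin 2`. -/
abbrev TP (N : ℕ) : Type := Matrix (Fin N → Fin 2) (Fin N → Fin 2) ℂ

/-- The Pauli matrices `σ₁, σ₂, σ₃`. -/
def pauli : Fin 3 → Matrix (Fin 2) (Fin 2) ℂ
  | 0 => !![0, 1; 1, 0]
  | 1 => !![0, -Complex.I; Complex.I, 0]
  | 2 => !![1, 0; 0, -1]

/-- The symmetrization operator `S_N` on `M₂(ℂ)^{⊗N}`: the average over all permutations
of the tensor factors. -/
def symmMat (N : ℕ) (A : TP N) : TP N :=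
  (N.factorial : ℂ)⁻¹ • ∑ σ : Equiv.Perm (Fin N), Matrix.of fun i j => A (i ∘ σ) (j ∘ σ)

/-- `b ⊗ I₂^{⊗(N−M)}` (junk value `0` if `M > N`). -/
def embedMat (M N : ℕ) (b : TP M) : TP N :=
  if h : M ≤ N then
    Matrix.of fun i j =>
      b (fun k => i (Fin.castLE h k)) (fun k => j (Fin.castLE h k)) *
        ∏ k ∈ Finset.univ.filter (fun k : Fin N => M ≤ (k : ℕ)),
          (if i k = j k then (1 : ℂ) else 0)
  else 0

/-- `S_{M,N}(b) = S_N(b ⊗ I₂^{⊗(N−M)})`. -/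
def SMN (M N : ℕ) (b : TP M) : TP N := symmMat N (embedMat M N b)

/-- The elementary tensor `σ_{m 0} ⊗ ⋯ ⊗ σ_{m (L-1)}` as a matrix on `(ℂ²)^{⊗L}`. -/
def pauliTensor {L : ℕ} (m : Fin L → Fin 3) : TP L :=
  Matrix.of fun i j => ∏ k, pauli (m k) (i k) (j k)

/-- For a monomial with exponents `d`, the list of its variable indices (first `d 0` copies
of `0`, then `d 1` copies of `1`, then `d 2` copies of `2`). -/
def monFun (d : Fin 3 →₀ ℕ) : Fin (d 0 + d 1 + d 2) → Fin 3 := fun k =>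
  if (k : ℕ) < d 0 then 0 else if (k : ℕ) < d 0 + d 1 then 1 else 2

/-- Quantization of the monomial `x^{d 0} y^{d 1} z^{d 2}`:
`S_{L,N}(σ_{j₁} ⊗ ⋯ ⊗ σ_{j_L})` if `L ≤ N`, and `0` if `L > N`. -/
def Qmon (N : ℕ) (d : Fin 3 →₀ ℕ) : TP N :=
  SMN (d 0 + d 1 + d 2) N (pauliTensor (monFun d))

/-- The quantization map `Q_{1/N}`: the linear extension of `Qmon` to all complex
polynomials in the three real variables `x, y, z`. -/
def Q (N : ℕ) (p : MvPolynomial (Fin 3) ℂ) : TP N :=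
  ∑ d ∈ p.support, p.coeff d • Qmon N d

/-- The symmetric subspace `Sym^N(ℂ²) ⊆ (ℂ²)^{⊗N}` (the fixed points of the permutation
action, i.e. the range of the vector symmetrizer). -/
def SymSub (N : ℕ) : Submodule ℂ (EuclideanSpace ℂ (Fin N → Fin 2)) where
  carrier := {v | ∀ σ : Equiv.Perm (Fin N), ∀ i, v (i ∘ σ) = v i}
  add_mem' := by
    intro a b ha hb σ i
    have : (a + b) (i ∘ σ) = a (i ∘ σ) + b (i ∘ σ) := rfl
    rw [this, ha σ i, hb σ i]; rfl
  zero_mem' := by intro σ i; rfl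
  smul_mem' := by
    intro c v hv σ i
    have : (c • v) (i ∘ σ) = c • (v (i ∘ σ)) := rfl
    rw [this, hv σ i]; rfl

/-- The vector symmetrizer. -/
def symVec (N : ℕ) (v : EuclideanSpace ℂ (Fin N → Fin 2)) :
    EuclideanSpace ℂ (Fin N → Fin 2) :=
  WithLp.toLp 2 (fun i => (N.factorial : ℂ)⁻¹ * ∑ σ : Equiv.Perm (Fin N), v (i ∘ σ))

lemma symVec_mem (N : ℕ) (v : EuclideanSpace ℂ (Fin N → Fin 2)) :
    symVec N v ∈ SymSub N := by
  intro τ i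
  show (N.factorial : ℂ)⁻¹ * ∑ σ : Equiv.Perm (Fin N), v ((i ∘ τ) ∘ σ)
      = (N.factorial : ℂ)⁻¹ * ∑ σ : Equiv.Perm (Fin N), v (i ∘ σ)
  congr 1
  exact Fintype.sum_equiv (Equiv.mulLeft τ) _ _ (fun σ => by rfl)

/-- The vector symmetrizer as a linear map onto the symmetric subspace. -/
def symProj (N : ℕ) : EuclideanSpace ℂ (Fin N → Fin 2) →ₗ[ℂ] SymSub N where
  toFun v := ⟨symVec N v, symVec_mem N v⟩
  map_add' v w := by
    apply Subtype.ext
    ext i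
    show (N.factorial : ℂ)⁻¹ * ∑ σ : Equiv.Perm (Fin N), (v + w) (i ∘ σ) = _
    have h : ∀ σ : Equiv.Perm (Fin N), (v + w) (i ∘ σ) = v (i ∘ σ) + w (i ∘ σ) :=
      fun _ => rfl
    simp only [h, Finset.sum_add_distrib]
    show _ = (N.factorial : ℂ)⁻¹ * (∑ σ : Equiv.Perm (Fin N), v (i ∘ σ))
        + (N.factorial : ℂ)⁻¹ * (∑ σ : Equiv.Perm (Fin N), w (i ∘ σ))
    ring
  map_smul' c v := by
    apply Subtype.ext
    ext i
    show (N.factorial : ℂ)⁻¹ * ∑ σ : Equiv.Perm (Fin N), (c • v) (i ∘ σ) = _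
    have h : ∀ σ : Equiv.Perm (Fin N), (c • v) (i ∘ σ) = c * v (i ∘ σ) := fun _ => rfl
    simp only [h, ← Finset.mul_sum]
    show _ = c * ((N.factorial : ℂ)⁻¹ * (∑ σ : Equiv.Perm (Fin N), v (i ∘ σ)))
    ring

/-- The restriction (compression) of a matrix `A` on `(ℂ²)^{⊗N}` to the symmetric subspace
`Sym^N(ℂ²)`, as a continuous linear operator; when `A` leaves `Sym^N(ℂ²)` invariant (as do
all operators considered here) this is exactly the restriction `A|_{Sym^N(ℂ²)}`. -/
def restrSym (N : ℕ) (A : TP N) : SymSub N →L[ℂ] SymSub N :=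
  LinearMap.toContinuousLinearMap
    ((symProj N) ∘ₗ (Matrix.toEuclideanLin A) ∘ₗ (SymSub N).subtype)

/-- The unit sphere `S² ⊂ ℝ³`. -/
abbrev S2 : Type := Metric.sphere (0 : EuclideanSpace ℝ (Fin 3)) 1

/-- Spherical coordinates `(θ, φ) ↦ (sin θ cos φ, sin θ sin φ, cos θ)`. -/
def sphCoord (a : ℝ × ℝ) : EuclideanSpace ℝ (Fin 3) :=
  WithLp.toLp 2 ![Real.sin a.1 * Real.cos a.2, Real.sin a.1 * Real.sin a.2, Real.cos a.1]

lemma sphCoord_mem (a : ℝ × ℝ) :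
    sphCoord a ∈ Metric.sphere (0 : EuclideanSpace ℝ (Fin 3)) 1 := by
  have h : ‖sphCoord a‖ = 1 := by
    rw [EuclideanSpace.norm_eq]
    have : ∑ i : Fin 3, sphCoord a i ^ 2 = 1 := by
      have hs := Real.sin_sq_add_cos_sq a.1
      have hc := Real.sin_sq_add_cos_sq a.2
      simp [sphCoord, Fin.sum_univ_three]
      nlinarith [hs, hc]
    have h2 : ∀ i : Fin 3, ‖sphCoord a i‖ ^ 2 = sphCoord a i ^ 2 := fun i => sq_abs _
    simp only [h2, this]
    exact Real.sqrt_one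
  simpa [mem_sphere_iff_norm] using h

/-- The standard surface measure `dΩ` on `S²` (of total mass `4π`), realized as the
push-forward of `sin θ dθ dφ` on `[0,π] × (−π,π]` under spherical coordinates. -/
def μS2 : Measure S2 :=
  Measure.map (fun a : ℝ × ℝ => (⟨sphCoord a, sphCoord_mem a⟩ : S2))
    (((volume : Measure (ℝ × ℝ)).restrict
        (Set.Icc (0 : ℝ) Real.pi ×ˢ Set.Ioc (-Real.pi) Real.pi)).withDensity
      fun a => ENNReal.ofReal (Real.sin a.1))

/-- The polar angle `θ ∈ [0, π]` of a point of `S²`. -/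
def thetaOf (Ω : S2) : ℝ := Real.arccos ((Ω : EuclideanSpace ℝ (Fin 3)) 2)

/-- The azimuthal angle `φ ∈ (−π, π]` of a point of `S²`. -/
def phiOf (Ω : S2) : ℝ :=
  Complex.arg (((Ω : EuclideanSpace ℝ (Fin 3)) 0 : ℂ) +
    ((Ω : EuclideanSpace ℝ (Fin 3)) 1 : ℂ) * Complex.I)

/-- The coherent spin state `|Ω⟩₁ = cos(θ/2) e₁ + e^{iφ} sin(θ/2) e₂ ∈ ℂ²`. -/
def cs1 (Ω : S2) : Fin 2 → ℂ :=
  ![(Real.cos (thetaOf Ω / 2) : ℂ),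
    Complex.exp (Complex.I * (phiOf Ω : ℂ)) * (Real.sin (thetaOf Ω / 2) : ℂ)]

/-- The `N`-fold coherent spin state `|Ω⟩_N = |Ω⟩₁^{⊗N} ∈ (ℂ²)^{⊗N}`. -/
def csN (N : ℕ) (Ω : S2) : EuclideanSpace ℂ (Fin N → Fin 2) :=
  WithLp.toLp 2 (fun i => ∏ k, cs1 Ω (i k))

/-- The matrix of the weak integral `((N+1)/(4π)) ∫_{S²} f(Ω) |Ω⟩⟨Ω|_N dΩ` on `(ℂ²)^{⊗N}`
(entrywise Bochner integral, which in finite dimension coincides with the weak integral). -/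
def Q'mat (N : ℕ) (f : S2 → ℂ) : TP N :=
  Matrix.of fun i j =>
    ((N + 1 : ℂ) / (4 * (Real.pi : ℂ))) * ∫ Ω, f Ω * csN N Ω i * conj (csN N Ω j) ∂μS2

/-- The coherent-state (Berezin) quantization map `Q'_{1/N}`, as an operator on
`Sym^N(ℂ²)` (the range of `|Ω⟩⟨Ω|_N` lies in `Sym^N(ℂ²)`, so the compression coincides
with the operator defined by the weak integral). -/
def Q' (N : ℕ) (f : S2 → ℂ) : SymSub N →L[ℂ] SymSub N := restrSym N (Q'mat N f)

/-- The restriction of a polynomial (in three real variables) to the unit sphere `S²`. -/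
def restrictS2 (p : MvPolynomial (Fin 3) ℂ) : S2 → ℂ :=
  fun Ω => MvPolynomial.eval (fun i => ((Ω : EuclideanSpace ℝ (Fin 3)) i : ℂ)) p

/-- The restriction to `S²` as a linear map. -/
def restrictS2Lin : MvPolynomial (Fin 3) ℂ →ₗ[ℂ] (S2 → ℂ) where
  toFun := restrictS2
  map_add' p q := by funext Ω; simp [restrictS2]
  map_smul' c p := by funext Ω; simp [restrictS2]

/-- `P_N(S²)`: the space of restrictions to `S²` of complex polynomials of degree `≤ N`
in three real variables. -/
def PNS2 (N : ℕ) : Submodule ℂ (S2 → ℂ) where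
  carrier := {g | ∃ p : MvPolynomial (Fin 3) ℂ, p.totalDegree ≤ N ∧ g = restrictS2 p}
  add_mem' := by
    rintro a b ⟨p, hp, rfl⟩ ⟨q, hq, rfl⟩
    exact ⟨p + q, le_trans (MvPolynomial.totalDegree_add p q) (by omega),
      by funext Ω; simp [restrictS2]⟩
  zero_mem' := ⟨0, by simp, by funext Ω; simp [restrictS2]⟩
  smul_mem' := by
    rintro c a ⟨p, hp, rfl⟩
    exact ⟨c • p, le_trans (MvPolynomial.totalDegree_smul_le c p) hp,
      by funext Ω; simp [restrictS2]⟩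

/-- The `N`-fold tensor power `U^{⊗N}` of a `2×2` matrix, on `(ℂ²)^{⊗N}`. -/
def tpow (N : ℕ) (U : Matrix (Fin 2) (Fin 2) ℂ) : TP N :=
  Matrix.of fun i j => ∏ k, U (i k) (j k)

/-- `σ_k(j) = I₂ ⊗ ⋯ ⊗ σ_k ⊗ ⋯ ⊗ I₂` with the Pauli matrix `σ_k` in the `j`-th slot. -/
def pauliAt (N : ℕ) (k : Fin 3) (j : Fin N) : TP N :=
  Matrix.of fun a b =>
    pauli k (a j) (b j) *
      ∏ t ∈ Finset.univ.filter (fun t : Fin N => t ≠ j), (if a t = b t then (1 : ℂ) else 0)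

/-- The quantum Curie–Weiss Hamiltonian
`h^{CW}_{1/N} = (1/N)( −(J/(2N)) Σ_{i,j} σ₃(i)σ₃(j) − B Σ_j σ₁(j))`. -/
def hCW (J B : ℝ) (N : ℕ) : TP N :=
  ((N : ℂ))⁻¹ • ((-(J / (2 * N)) : ℂ) • ∑ i : Fin N, ∑ j : Fin N,
      pauliAt N 2 i * pauliAt N 2 j
    + (-(B : ℂ)) • ∑ j : Fin N, pauliAt N 0 j)

open scoped Classical in
/-- The action of a (special orthogonal) matrix on the unit sphere `S²`
(junk value if the image does not lie on the sphere). -/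
def rotAct (R : Matrix (Fin 3) (Fin 3) ℝ) (Ω : S2) : S2 :=
  if h : (WithLp.toLp 2 (R.mulVec (Ω : EuclideanSpace ℝ (Fin 3))) : EuclideanSpace ℝ (Fin 3)) ∈
      Metric.sphere (0 : EuclideanSpace ℝ (Fin 3)) 1
  then ⟨WithLp.toLp 2 (R.mulVec (Ω : EuclideanSpace ℝ (Fin 3))), h⟩ else Ω

/-- A polynomial in three variables is harmonic if its Laplacian vanishes. -/
def IsHarmonic (p : MvPolynomial (Fin 3) ℂ) : Prop :=
  ∑ i : Fin 3, MvPolynomial.pderiv i (MvPolynomial.pderiv i p) = 0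

/-- The polynomial `x² + y² + z² − 1`. -/
def sphPoly : MvPolynomial (Fin 3) ℂ :=
  MvPolynomial.X 0 ^ 2 + MvPolynomial.X 1 ^ 2 + MvPolynomial.X 2 ^ 2 - 1

/-- The Dicke state `|k, N−k⟩ ∈ Sym^N(ℂ²)`: `binom(N,k)^{-1/2}` times the sum of all
elementary tensors with exactly `k` factors `e₂` (and `N−k` factors `e₁`). -/
def dicke (N k : ℕ) : EuclideanSpace ℂ (Fin N → Fin 2) :=
  WithLp.toLp 2 (fun i => if (Finset.univ.filter fun t => i t = 1).card = k
    then ((Real.sqrt (N.choose k) : ℂ))⁻¹ else 0)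

/-- The operator norm of a matrix acting on `(ℂ²)^{⊗N}` with its Euclidean (ℓ²) norm. -/
def matOpNorm {N : ℕ} (A : TP N) : ℝ :=
  ‖LinearMap.toContinuousLinearMap (Matrix.toEuclideanLin A)‖

lemma Bentry (u v : Fin 2 → Fin 2) :
    (pauliTensor (fun _ : Fin 2 => (0 : Fin 3)) + pauliTensor (fun _ : Fin 2 => (1 : Fin 3))) u v
      = if u 0 ≠ u 1 ∧ v 0 = u 1 ∧ v 1 = u 0 then 2 else 0 := by
  have h : ∀ x : Fin 2, x = 0 ∨ x = 1 := by decide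
  show pauliTensor _ u v + pauliTensor _ u v = _
  simp only [pauliTensor, Matrix.of_apply, Fin.prod_univ_two]
  rcases h (u 0) with h0 | h0 <;> rcases h (u 1) with h1 | h1 <;>
    rcases h (v 0) with h2 | h2 <;> rcases h (v 1) with h3 | h3 <;>
    simp [h0, h1, h2, h3, pauli] <;> ring_nf


lemma dicke_perm (N k : ℕ) (σ : Equiv.Perm (Fin N)) (i : Fin N → Fin 2) :
    dicke N k (i ∘ σ) = dicke N k i := by
  have key : (Finset.univ.filter fun t => (i ∘ σ) t = 1).card
      = (Finset.univ.filter fun t => i t = 1).card := by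
    apply Finset.card_bij (fun t _ => σ t)
    · simp [Function.comp]
    · intro a _ b _ h; exact σ.injective h
    · intro b hb
      refine ⟨σ⁻¹ b, by simpa using hb, by simp⟩
  unfold dicke
  simp only [WithLp.ofLp_toLp]
  rw [key]


lemma dickeInnerSum (N k : ℕ) (hN : 2 ≤ N) (w : Fin N → Fin 2) :
    ∑ j : Fin N → Fin 2,
      embedMat 2 N (pauliTensor (fun _ : Fin 2 => (0 : Fin 3)) +
        pauliTensor (fun _ : Fin 2 => (1 : Fin 3))) w j * dicke N k j
    = 2 * (if w (Fin.castLE hN 0) ≠ w (Fin.castLE hN 1) then 1 else 0) * dicke N k w := by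
  set e0 : Fin N := Fin.castLE hN 0 with he0
  set e1 : Fin N := Fin.castLE hN 1 with he1
  have he01 : e0 ≠ e1 := by
    simp [he0, he1, Fin.ext_iff]
  set j₀ : Fin N → Fin 2 := w ∘ (Equiv.swap e0 e1) with hj₀
  have hj0e0 : j₀ e0 = w e1 := by simp [hj₀]
  have hj0e1 : j₀ e1 = w e0 := by simp [hj₀]
  have hj0t : ∀ t : Fin N, t ≠ e0 → t ≠ e1 → j₀ t = w t := by
    intro t h1 h2
    simp [hj₀, Equiv.swap_apply_of_ne_of_ne h1 h2]
  have hval : ∀ t : Fin N, 2 ≤ (t : ℕ) → t ≠ e0 ∧ t ≠ e1 := by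
    intro t ht
    constructor <;> · intro h; rw [h] at ht; simp [he0, he1] at ht
  rw [Finset.sum_eq_single j₀]
  · -- value at j₀
    rw [embedMat, dif_pos hN]
    have hB := Bentry (fun kk => w (Fin.castLE hN kk)) (fun kk => j₀ (Fin.castLE hN kk))
    simp only [Matrix.of_apply]
    rw [hB]
    have hprod : ∏ t ∈ Finset.univ.filter (fun t : Fin N => 2 ≤ (t : ℕ)),
        (if w t = j₀ t then (1:ℂ) else 0) = 1 := by
      apply Finset.prod_eq_one
      intro t ht
      simp only [Finset.mem_filter] at ht
      rw [hj0t t (hval t ht.2).1 (hval t ht.2).2, if_pos rfl]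
    rw [hprod, mul_one]
    have hvd : dicke N k j₀ = dicke N k w := dicke_perm N k (Equiv.swap e0 e1) w
    rw [hvd]
    show (if w e0 ≠ w e1 ∧ j₀ e0 = w e1 ∧ j₀ e1 = w e0 then (2:ℂ) else 0) * dicke N k w = _
    rw [hj0e0, hj0e1]
    by_cases hne : w e0 ≠ w e1
    · rw [if_pos ⟨hne, rfl, rfl⟩, if_pos hne]; ring
    · rw [if_neg (by tauto), if_neg hne]; ring
  · -- other terms vanish
    intro j _ hj
    rw [embedMat, dif_pos hN]
    simp only [Matrix.of_apply]
    rw [Bentry (fun kk => w (Fin.castLE hN kk)) (fun kk => j (Fin.castLE hN kk))]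
    by_cases hB : w e0 ≠ w e1 ∧ j e0 = w e1 ∧ j e1 = w e0
    · -- then j differs from j₀ outside {e0,e1}
      obtain ⟨t, ht⟩ : ∃ t, j t ≠ j₀ t := Function.ne_iff.mp hj
      have ht0 : t ≠ e0 := by
        intro h; rw [h, hj0e0, hB.2.1] at ht; exact ht rfl
      have ht1 : t ≠ e1 := by
        intro h; rw [h, hj0e1, hB.2.2] at ht; exact ht rfl
      have hmem : t ∈ Finset.univ.filter (fun s : Fin N => 2 ≤ (s : ℕ)) := by
        simp only [Finset.mem_filter, Finset.mem_univ, true_and]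
        by_contra hc
        push_neg at hc
        interval_cases h : (t : ℕ)
        · exact ht0 (Fin.ext (by simp [he0, h]))
        · exact ht1 (Fin.ext (by simp [he1, h]))
      rw [Finset.prod_eq_zero hmem]
      · ring
      · rw [if_neg]
        intro h; apply ht; rw [← h, hj0t t ht0 ht1]
    · rw [if_neg hB]; ring
  · intro h; exact absurd (Finset.mem_univ j₀) h


open Finset in
lemma stab_card (N : ℕ) (e0 e1 : Fin N) (h : e0 ≠ e1) :
    (univ.filter fun σ : Equiv.Perm (Fin N) => σ e0 = e0 ∧ σ e1 = e1).card
      = (N - 2).factorial := by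
  classical
  rw [← Fintype.card_subtype]
  set p : Fin N → Prop := fun a => a ≠ e0 ∧ a ≠ e1 with hp
  have e2 : {f : Equiv.Perm (Fin N) // ∀ a, ¬p a → f a = a}
      ≃ {σ : Equiv.Perm (Fin N) // σ e0 = e0 ∧ σ e1 = e1} := by
    apply Equiv.subtypeEquivRight
    intro f
    constructor
    · intro hf
      exact ⟨hf e0 (by simp [hp]), hf e1 (by simp [hp])⟩
    · rintro ⟨h0, h1⟩ a ha
      simp only [hp, not_and_or, not_ne_iff] at ha
      rcases ha with rfl | rfl
      · exact h0
      · exact h1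
  rw [← Fintype.card_congr ((Equiv.Perm.subtypeEquivSubtypePerm p).trans e2),
    Fintype.card_perm]
  congr 1
  rw [Fintype.card_subtype]
  have : (univ.filter p) = (univ.erase e0).erase e1 := by
    ext a
    simp only [hp, mem_filter, mem_univ, true_and, mem_erase, and_true]
    tauto
  rw [this, card_erase_of_mem, card_erase_of_mem (mem_univ e0)]
  · simp only [card_univ, Fintype.card_fin]
    omega
  · exact mem_erase.mpr ⟨h.symm, mem_univ e1⟩


open Finset in
lemma fiber_card (N : ℕ) (e0 e1 p q : Fin N) (he : e0 ≠ e1) (hpq : p ≠ q) :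
    (univ.filter fun σ : Equiv.Perm (Fin N) => σ e0 = p ∧ σ e1 = q).card
      = (N - 2).factorial := by
  classical
  obtain ⟨τ, hτ0, hτ1⟩ : ∃ τ : Equiv.Perm (Fin N), τ e0 = p ∧ τ e1 = q := by
    set s := Equiv.swap e0 p with hs
    refine ⟨s.trans (Equiv.swap (s e1) q), ?_, ?_⟩
    · have h1 : s e0 = p := Equiv.swap_apply_left _ _
      have h2 : p ≠ s e1 := by
        rw [← h1]; exact fun hc => he (s.injective hc)
      simp only [Equiv.trans_apply, h1]
      exact Equiv.swap_apply_of_ne_of_ne h2 hpq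
    · simp only [Equiv.trans_apply]
      exact Equiv.swap_apply_left _ _
  rw [← stab_card N e0 e1 he]
  apply Finset.card_bij' (fun σ _ => τ⁻¹ * σ) (fun σ _ => τ * σ)
  · intro σ hσ
    simp only [mem_filter, mem_univ, true_and] at hσ ⊢
    constructor
    · show τ⁻¹ (σ e0) = e0; rw [hσ.1, ← hτ0]; simp
    · show τ⁻¹ (σ e1) = e1; rw [hσ.2, ← hτ1]; simp
  · intro σ hσ
    simp only [mem_filter, mem_univ, true_and] at hσ ⊢
    constructor
    · show τ (σ e0) = p; rw [hσ.1, hτ0]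
    · show τ (σ e1) = q; rw [hσ.2, hτ1]
  · intro σ _; simp [← mul_assoc]
  · intro σ _; simp [← mul_assoc]


open Finset in
lemma pair_sum (N k : ℕ) (i : Fin N → Fin 2)
    (hcard : (univ.filter fun t => i t = 1).card = k) :
    ∑ p : Fin N, ∑ q : Fin N, (if i p ≠ i q then (1:ℂ) else 0)
      = 2 * k * ((N : ℂ) - k) := by
  have h1 : ∑ p : Fin N, (if i p = 1 then (1:ℂ) else 0) = k := by
    rw [Finset.sum_boole, hcard]
  have h2 : ∑ p : Fin N, (if i p = 1 then (0:ℂ) else 1) = (N : ℂ) - k := by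
    have : ∀ p, (if i p = 1 then (0:ℂ) else 1) = 1 - (if i p = 1 then 1 else 0) := by
      intro p; split_ifs <;> ring
    simp only [this, Finset.sum_sub_distrib, h1, Finset.sum_const, card_univ,
      Fintype.card_fin, nsmul_eq_mul, mul_one]
  have key : ∀ p q : Fin N, (if i p ≠ i q then (1:ℂ) else 0) =
      (if i p = 1 then (1:ℂ) else 0) * (if i q = 1 then (0:ℂ) else 1) +
      (if i p = 1 then (0:ℂ) else 1) * (if i q = 1 then (1:ℂ) else 0) := by
    intro p q
    have hf : ∀ x : Fin 2, x = 0 ∨ x = 1 := by decide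
    rcases hf (i p) with h | h <;> rcases hf (i q) with h' | h' <;>
      simp [h, h']
  simp only [key]
  have : ∀ p : Fin N, ∑ q : Fin N,
      ((if i p = 1 then (1:ℂ) else 0) * (if i q = 1 then (0:ℂ) else 1) +
      (if i p = 1 then (0:ℂ) else 1) * (if i q = 1 then (1:ℂ) else 0))
      = (if i p = 1 then (1:ℂ) else 0) * ((N:ℂ) - k) +
        (if i p = 1 then (0:ℂ) else 1) * k := by
    intro p
    rw [Finset.sum_add_distrib, ← Finset.mul_sum, ← Finset.mul_sum, h1, h2]
  simp only [this]
  rw [Finset.sum_add_distrib, ← Finset.sum_mul, ← Finset.sum_mul, h1, h2]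
  ring


open Finset in
lemma perm_group_sum (N : ℕ) (e0 e1 : Fin N) (he : e0 ≠ e1)
    (F : Fin N → Fin N → ℂ) (hdiag : ∀ p, F p p = 0) :
    ∑ σ : Equiv.Perm (Fin N), F (σ e0) (σ e1)
      = ((N - 2).factorial : ℂ) * ∑ p : Fin N, ∑ q : Fin N, F p q := by
  classical
  have step1 : ∑ σ : Equiv.Perm (Fin N), F (σ e0) (σ e1)
      = ∑ b : Fin N × Fin N,
          ((univ.filter fun σ : Equiv.Perm (Fin N) => (σ e0, σ e1) = b).card) • F b.1 b.2 := by
    rw [Finset.sum_comp (fun b : Fin N × Fin N => F b.1 b.2)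
      (fun σ : Equiv.Perm (Fin N) => (σ e0, σ e1))]
    apply Finset.sum_subset (Finset.subset_univ _)
    intro b _ hb
    have : (univ.filter fun σ : Equiv.Perm (Fin N) => (σ e0, σ e1) = b) = ∅ := by
      rw [Finset.filter_eq_empty_iff]
      intro σ _ hσ
      exact hb (Finset.mem_image.mpr ⟨σ, Finset.mem_univ σ, hσ⟩)
    rw [this]
    simp
  rw [step1]
  have step2 : ∀ b : Fin N × Fin N,
      ((univ.filter fun σ : Equiv.Perm (Fin N) => (σ e0, σ e1) = b).card) • F b.1 b.2
      = ((N - 2).factorial : ℂ) * F b.1 b.2 := by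
    intro b
    by_cases hb : b.1 = b.2
    · rw [← hb, hdiag]
      simp
    · have : (univ.filter fun σ : Equiv.Perm (Fin N) => (σ e0, σ e1) = b)
          = (univ.filter fun σ : Equiv.Perm (Fin N) => σ e0 = b.1 ∧ σ e1 = b.2) := by
        apply Finset.filter_congr
        intro σ _
        simp [Prod.ext_iff]
      rw [this, fiber_card N e0 e1 b.1 b.2 he hb, nsmul_eq_mul]
  simp only [step2]
  rw [← Finset.mul_sum, Fintype.sum_prod_type]


lemma coeffEq (N k : ℕ) (hN : 2 ≤ N) :
    ((N.factorial : ℂ))⁻¹ * (2 * (((N - 2).factorial : ℂ) * (2 * k * ((N : ℂ) - k))))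
      = (((4 * k * ((N : ℝ) - k)) / (N * ((N : ℝ) - 1)) : ℝ) : ℂ) := by
  obtain ⟨m, rfl⟩ : ∃ m, N = m + 2 := ⟨N - 2, by omega⟩
  have hmm : (m + 2 - 2 : ℕ) = m := by omega
  have hfac : ((m + 2).factorial : ℂ) = ((m : ℂ) + 2) * ((m : ℂ) + 1) * (m.factorial : ℂ) := by
    have h : (m + 2).factorial = (m + 2) * ((m + 1) * m.factorial) := rfl
    rw [h]
    push_cast
    ring
  have hfne : (m.factorial : ℂ) ≠ 0 := Nat.cast_ne_zero.mpr (Nat.factorial_ne_zero m)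
  have h1 : ((m : ℂ) + 2) ≠ 0 := by
    have h : ((m + 2 : ℕ) : ℂ) ≠ 0 := Nat.cast_ne_zero.mpr (by omega)
    push_cast at h
    exact h
  have h2 : ((m : ℂ) + 1) ≠ 0 := by
    have h : ((m + 1 : ℕ) : ℂ) ≠ 0 := Nat.cast_ne_zero.mpr (by omega)
    push_cast at h
    exact h
  rw [hmm, hfac]
  push_cast
  rw [show ((m:ℂ) + 2 - 1) = (m:ℂ) + 1 from by ring]
  field_simp
  ring


/-- for `N ≥ 2` and `0 ≤ k ≤ N`, the Dicke vector `|k, N−k⟩` is an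
eigenvector of `S_{2,N}(σ₁⊗σ₁ + σ₂⊗σ₂)` with eigenvalue `4k(N−k)/(N(N−1))`. -/
theorem dicke_eigenvector_SMN_sigma1_sigma2 (N k : ℕ) (hN : 2 ≤ N) (hk : k ≤ N) :
    (SMN 2 N (pauliTensor (fun _ : Fin 2 => (0 : Fin 3)) +
        pauliTensor (fun _ : Fin 2 => (1 : Fin 3)))).mulVec (dicke N k) =
      (((4 * k * ((N : ℝ) - k)) / (N * ((N : ℝ) - 1)) : ℝ) : ℂ) • dicke N k := by
  set B := pauliTensor (fun _ : Fin 2 => (0 : Fin 3)) +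
    pauliTensor (fun _ : Fin 2 => (1 : Fin 3)) with hB
  set A := embedMat 2 N B with hA
  set v := dicke N k with hv
  set e0 : Fin N := Fin.castLE hN 0 with he0
  set e1 : Fin N := Fin.castLE hN 1 with he1
  have he01 : e0 ≠ e1 := by simp [he0, he1, Fin.ext_iff]
  set c : ℂ := (((4 * k * ((N : ℝ) - k)) / (N * ((N : ℝ) - 1)) : ℝ) : ℂ) with hc
  funext i
  show (SMN 2 N B).mulVec v i = (c • v) i
  have hsmul : (c • v) i = c * v i := rfl
  have hentry : ∀ j, SMN 2 N B i j
      = (N.factorial : ℂ)⁻¹ * ∑ σ : Equiv.Perm (Fin N), A (i ∘ σ) (j ∘ σ) := by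
    intro j
    simp [SMN, symmMat, ← hA, Matrix.sum_apply, smul_eq_mul]
  have hlhs : (SMN 2 N B).mulVec v i
      = (N.factorial : ℂ)⁻¹ * ∑ σ : Equiv.Perm (Fin N),
          ∑ j : Fin N → Fin 2, A (i ∘ σ) (j ∘ σ) * v j := by
    simp only [Matrix.mulVec, dotProduct, hentry]
    have hstep : ∀ j : Fin N → Fin 2,
        ((N.factorial : ℂ)⁻¹ * ∑ σ : Equiv.Perm (Fin N), A (i ∘ σ) (j ∘ σ)) * v j
        = ∑ σ : Equiv.Perm (Fin N), (N.factorial : ℂ)⁻¹ * (A (i ∘ σ) (j ∘ σ) * v j) := by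
      intro j
      rw [Finset.mul_sum, Finset.sum_mul]
      exact Finset.sum_congr rfl fun σ _ => by ring
    simp only [hstep]
    rw [Finset.sum_comm]
    simp only [← Finset.mul_sum]
  rw [hlhs]
  have hinner : ∀ σ : Equiv.Perm (Fin N),
      ∑ j : Fin N → Fin 2, A (i ∘ σ) (j ∘ σ) * v j
      = 2 * (if i (σ e0) ≠ i (σ e1) then 1 else 0) * v i := by
    intro σ
    have hre : ∑ j : Fin N → Fin 2, A (i ∘ σ) (j ∘ σ) * v j
        = ∑ j : Fin N → Fin 2, A (i ∘ σ) j * v j := by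
      have hbij : Function.Bijective (fun j : Fin N → Fin 2 => j ∘ ⇑σ) := by
        constructor
        · intro a b h
          funext x
          have := congrFun h (σ⁻¹ x)
          simpa using this
        · intro b
          refine ⟨b ∘ ⇑σ⁻¹, ?_⟩
          funext x
          simp
      apply Fintype.sum_bijective _ hbij
      intro j
      show A (i ∘ ⇑σ) (j ∘ ⇑σ) * dicke N k j
        = A (i ∘ ⇑σ) (j ∘ ⇑σ) * dicke N k (j ∘ ⇑σ)
      rw [dicke_perm]
    rw [hre, hA, dickeInnerSum N k hN (i ∘ σ), dicke_perm]
    rfl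
  simp only [hinner]
  have hS := perm_group_sum N e0 e1 he01
    (fun p q => if i p ≠ i q then (1:ℂ) else 0) (fun p => by simp)
  simp only [← Finset.sum_mul, ← Finset.mul_sum]
  rw [hS, hsmul]
  by_cases hcard : (Finset.univ.filter fun t => i t = 1).card = k
  · rw [pair_sum N k i hcard, hc, ← coeffEq N k hN]
    ring
  · have hvz : v i = 0 := by
      rw [hv]
      unfold dicke
      simp only [WithLp.ofLp_toLp]
      rw [if_neg hcard]
    rw [hvz]
    ring

end
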